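/- Let B, B' be real matrices with d columns such that (1−ε)‖Bx‖₂ ≤ ‖B'x‖₂ ≤ (1+ε)‖Bx‖₂ for all x ∈ ℝ^d, where 0 < ε < 1/2. Then for every x ∈ ℝ^d in the row span of B (equivalently orthogonal to ker(B)), x^T (B'^T B')^+ x = (1 ± O(ε)) · x^T (B^T B)^+ x, where M^+ denotes the Moore–Penrose pseudoinverse. -/
import Mathlib


open Matrix

/-- Penrose conditions characterizing the Moore–Penrose pseudoinverse. -/
def IsMoorePenrose {m n : Type*} [Fintype m] [Fintype n]
    (M : Matrix m n ℝ) (P : Matrix n m ℝ) : Prop :=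
  M * P * M = M ∧ P * M * P = P ∧ (M * P)ᵀ = M * P ∧ (P * M)ᵀ = P * M

private lemma quadBB {n d : ℕ} (B : Matrix (Fin n) (Fin d) ℝ) (x y : Fin d → ℝ) :
    dotProduct x ((Bᵀ * B).mulVec y) = dotProduct (B.mulVec x) (B.mulVec y) := by
  rw [← Matrix.mulVec_mulVec, Matrix.dotProduct_mulVec, Matrix.vecMul_transpose]

private lemma dot_symm {d : ℕ} (M : Matrix (Fin d) (Fin d) ℝ) (hM : Mᵀ = M)
    (x y : Fin d → ℝ) :
    dotProduct x (M.mulVec y) = dotProduct (M.mulVec x) y := by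
  conv_lhs => rw [Matrix.dotProduct_mulVec]
  conv_lhs => rw [← hM, Matrix.vecMul_transpose]

private lemma dot_self_nonneg' {m : ℕ} (v : Fin m → ℝ) : 0 ≤ dotProduct v v :=
  Finset.sum_nonneg fun i _ => mul_self_nonneg _

private lemma dot_sq_expand {m : ℕ} (a : ℝ) (v w : Fin m → ℝ) :
    0 ≤ a ^ 2 * dotProduct v v - 2 * a * dotProduct v w + dotProduct w w := by
  have h := dot_self_nonneg' (a • v - w)
  have e : dotProduct (a • v - w) (a • v - w)
      = a ^ 2 * dotProduct v v - 2 * a * dotProduct v w + dotProduct w w := by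
    simp only [dotProduct_sub, sub_dotProduct, smul_dotProduct, dotProduct_smul,
      smul_eq_mul, dotProduct_comm w v]
    ring
  rw [e] at h
  exact h

private lemma mp_unique {d : ℕ} {M P Q : Matrix (Fin d) (Fin d) ℝ}
    (hP : IsMoorePenrose M P) (hQ : IsMoorePenrose M Q) : P = Q := by
  obtain ⟨hP1, hP2, hP3, hP4⟩ := hP
  obtain ⟨hQ1, hQ2, hQ3, hQ4⟩ := hQ
  have h1 : P = P * M * Q := by
    calc P = P * M * P := hP2.symm
      _ = P * (M * P) := by rw [mul_assoc]
      _ = P * (M * P)ᵀ := by rw [hP3]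
      _ = P * (M * Q * M * P)ᵀ := by rw [hQ1]
      _ = P * ((M * Q) * (M * P))ᵀ := by rw [mul_assoc (M * Q) M P]
      _ = P * ((M * P)ᵀ * (M * Q)ᵀ) := by rw [Matrix.transpose_mul]
      _ = P * ((M * P) * (M * Q)) := by rw [hP3, hQ3]
      _ = (P * M * P) * (M * Q) := by noncomm_ring
      _ = P * (M * Q) := by rw [hP2]
      _ = P * M * Q := by rw [mul_assoc]
  have h2 : Q = P * M * Q := by
    calc Q = Q * M * Q := hQ2.symm
      _ = (Q * M)ᵀ * Q := by rw [hQ4]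
      _ = (Q * (M * P * M))ᵀ * Q := by rw [hP1]
      _ = ((Q * M) * (P * M))ᵀ * Q := by
            rw [show Q * (M * P * M) = (Q * M) * (P * M) from by noncomm_ring]
      _ = ((P * M)ᵀ * (Q * M)ᵀ) * Q := by rw [Matrix.transpose_mul]
      _ = ((P * M) * (Q * M)) * Q := by rw [hP4, hQ4]
      _ = (P * M) * (Q * M * Q) := by noncomm_ring
      _ = (P * M) * Q := by rw [hQ2]
  rw [h1, ← h2]

private lemma mp_symm {d : ℕ} {M P : Matrix (Fin d) (Fin d) ℝ} (hM : Mᵀ = M)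
    (h : IsMoorePenrose M P) : Pᵀ = P := by
  obtain ⟨h1, h2, h3, h4⟩ := h
  have e : M * Pᵀ = P * M := by
    calc M * Pᵀ = Mᵀ * Pᵀ := by rw [hM]
      _ = (P * M)ᵀ := (Matrix.transpose_mul P M).symm
      _ = P * M := h4
  have e' : Pᵀ * M = M * P := by
    calc Pᵀ * M = Pᵀ * Mᵀ := by rw [hM]
      _ = (M * P)ᵀ := (Matrix.transpose_mul M P).symm
      _ = M * P := h3
  have hT : IsMoorePenrose M Pᵀ := by
    refine ⟨?_, ?_, ?_, ?_⟩
    · have hh : M * Pᵀ * M = (M * P * M)ᵀ := by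
        rw [Matrix.transpose_mul, Matrix.transpose_mul, hM, ← mul_assoc]
      rw [hh, h1, hM]
    · calc Pᵀ * M * Pᵀ = Pᵀ * (M * Pᵀ) := by rw [mul_assoc]
        _ = Pᵀ * (P * M) := by rw [e]
        _ = ((P * M)ᵀ * P)ᵀ := by
              rw [Matrix.transpose_mul, Matrix.transpose_transpose]
        _ = ((P * M) * P)ᵀ := by rw [h4]
        _ = Pᵀ := by rw [h2]
    · rw [e, h4]
    · rw [e', h3]
  exact mp_unique hT ⟨h1, h2, h3, h4⟩

private lemma range_fact {n d : ℕ} (A : Matrix (Fin n) (Fin d) ℝ)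
    (P : Matrix (Fin d) (Fin d) ℝ) (hP : IsMoorePenrose (Aᵀ * A) P) (x : Fin d → ℝ)
    (hx : ∀ y, A.mulVec y = 0 → dotProduct x y = 0) :
    (Aᵀ * A).mulVec (P.mulVec x) = x := by
  have hMsym : (Aᵀ * A)ᵀ = Aᵀ * A := by
    rw [Matrix.transpose_mul, Matrix.transpose_transpose]
  have hPsym : Pᵀ = P := mp_symm hMsym hP
  obtain ⟨h1, h2, h3, h4⟩ := hP
  have hcomm : (Aᵀ * A) * P = P * (Aᵀ * A) := by
    conv_lhs => rw [← h3]
    rw [Matrix.transpose_mul, hPsym, hMsym]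
  have hMMP : (Aᵀ * A) * (Aᵀ * A) * P = Aᵀ * A := by
    rw [mul_assoc, hcomm, ← mul_assoc, h1]
  have hMw : (Aᵀ * A).mulVec (x - (Aᵀ * A).mulVec (P.mulVec x)) = 0 := by
    rw [Matrix.mulVec_sub, Matrix.mulVec_mulVec, Matrix.mulVec_mulVec, hMMP, sub_self]
  have hAw : A.mulVec (x - (Aᵀ * A).mulVec (P.mulVec x)) = 0 := by
    have h0 : dotProduct (A.mulVec (x - (Aᵀ * A).mulVec (P.mulVec x)))
        (A.mulVec (x - (Aᵀ * A).mulVec (P.mulVec x))) = 0 := by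
      rw [← quadBB, hMw, dotProduct_zero]
    exact dotProduct_self_eq_zero.mp h0
  have hxw : dotProduct x (x - (Aᵀ * A).mulVec (P.mulVec x)) = 0 := hx _ hAw
  have hww : dotProduct (x - (Aᵀ * A).mulVec (P.mulVec x))
      (x - (Aᵀ * A).mulVec (P.mulVec x)) = 0 := by
    rw [dotProduct_sub]
    have e1 : dotProduct (x - (Aᵀ * A).mulVec (P.mulVec x)) x = 0 := by
      rw [dotProduct_comm]; exact hxw
    have e2 : dotProduct (x - (Aᵀ * A).mulVec (P.mulVec x))
        ((Aᵀ * A).mulVec (P.mulVec x)) = 0 := by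
      rw [dot_symm _ hMsym, hMw, zero_dotProduct]
    rw [e1, e2, sub_zero]
  have hw0 : x - (Aᵀ * A).mulVec (P.mulVec x) = 0 := dotProduct_self_eq_zero.mp hww
  exact (sub_eq_zero.mp hw0).symm

/-- generalized leverage-score quadratic forms are preserved up to
1 ± O(ε) under an ε-subspace embedding, for vectors orthogonal to ker(B). -/
theorem stmt2 : ∃ C : ℝ, 0 < C ∧
    ∀ (n₁ n₁' d : ℕ) (B : Matrix (Fin n₁) (Fin d) ℝ) (B' : Matrix (Fin n₁') (Fin d) ℝ)
      (ε : ℝ), 0 < ε → ε < 1/2 →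
      (∀ x : Fin d → ℝ,
        (1 - ε) * Real.sqrt (∑ i, (B.mulVec x i)^2) ≤ Real.sqrt (∑ i, (B'.mulVec x i)^2) ∧
        Real.sqrt (∑ i, (B'.mulVec x i)^2) ≤ (1 + ε) * Real.sqrt (∑ i, (B.mulVec x i)^2)) →
      ∀ (P P' : Matrix (Fin d) (Fin d) ℝ),
        IsMoorePenrose (Bᵀ * B) P → IsMoorePenrose (B'ᵀ * B') P' →
        ∀ x : Fin d → ℝ, (∀ y : Fin d → ℝ, B.mulVec y = 0 → dotProduct x y = 0) →
          (1 - C * ε) * dotProduct x (P.mulVec x) ≤ dotProduct x (P'.mulVec x) ∧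
          dotProduct x (P'.mulVec x) ≤ (1 + C * ε) * dotProduct x (P.mulVec x) := by
  refine ⟨8, by norm_num, ?_⟩
  intro n₁ n₁' d B B' ε hε hε2 hemb P P' hP hP' x hx
  have hGsym : (Bᵀ * B)ᵀ = Bᵀ * B := by
    rw [Matrix.transpose_mul, Matrix.transpose_transpose]
  have hG'sym : (B'ᵀ * B')ᵀ = B'ᵀ * B' := by
    rw [Matrix.transpose_mul, Matrix.transpose_transpose]
  have hsumB : ∀ y : Fin d → ℝ, ∑ i, (B.mulVec y i)^2
      = dotProduct (B.mulVec y) (B.mulVec y) := by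
    intro y; simp [dotProduct, pow_two]
  have hsumB' : ∀ y : Fin d → ℝ, ∑ i, (B'.mulVec y i)^2
      = dotProduct (B'.mulVec y) (B'.mulVec y) := by
    intro y; simp [dotProduct, pow_two]
  -- squared form of the embedding hypothesis
  have hemb2 : ∀ y : Fin d → ℝ,
      (1-ε)^2 * dotProduct (B.mulVec y) (B.mulVec y)
        ≤ dotProduct (B'.mulVec y) (B'.mulVec y) ∧
      dotProduct (B'.mulVec y) (B'.mulVec y)
        ≤ (1+ε)^2 * dotProduct (B.mulVec y) (B.mulVec y) := by
    intro y
    obtain ⟨h1, h2⟩ := hemb y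
    rw [hsumB y, hsumB' y] at h1 h2
    have ha : 0 ≤ dotProduct (B.mulVec y) (B.mulVec y) := dot_self_nonneg' _
    have hb : 0 ≤ dotProduct (B'.mulVec y) (B'.mulVec y) := dot_self_nonneg' _
    have sa := Real.sq_sqrt ha
    have sb := Real.sq_sqrt hb
    have sa0 := Real.sqrt_nonneg (dotProduct (B.mulVec y) (B.mulVec y))
    have sb0 := Real.sqrt_nonneg (dotProduct (B'.mulVec y) (B'.mulVec y))
    constructor
    · have g1 := mul_self_le_mul_self (mul_nonneg (by linarith : (0:ℝ) ≤ 1-ε) sa0) h1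
      nlinarith [g1, sa, sb, sq_nonneg (1-ε)]
    · have g2 := mul_self_le_mul_self sb0 h2
      nlinarith [g2, sa, sb, sq_nonneg (1+ε)]
  -- kernel containment
  have hker : ∀ y : Fin d → ℝ, B'.mulVec y = 0 → B.mulVec y = 0 := by
    intro y hy
    obtain ⟨h1, _⟩ := hemb2 y
    rw [hy] at h1
    simp only [dotProduct_zero] at h1
    have ha : 0 ≤ dotProduct (B.mulVec y) (B.mulVec y) := dot_self_nonneg' _
    have hpos : (0:ℝ) < (1-ε)^2 := pow_pos (by linarith) 2
    have : dotProduct (B.mulVec y) (B.mulVec y) = 0 := by nlinarith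
    exact dotProduct_self_eq_zero.mp this
  have hx' : ∀ y : Fin d → ℝ, B'.mulVec y = 0 → dotProduct x y = 0 :=
    fun y hy => hx y (hker y hy)
  have hxG : (Bᵀ * B).mulVec (P.mulVec x) = x := range_fact B P hP x hx
  have hxG' : (B'ᵀ * B').mulVec (P'.mulVec x) = x := range_fact B' P' hP' x hx'
  set u := P.mulVec x with hu
  set u' := P'.mulVec x with hu'
  set t := dotProduct x u with ht
  set t' := dotProduct x u' with ht'
  have htq : t = dotProduct (B.mulVec u) (B.mulVec u) := by
    rw [ht, ← hxG, dotProduct_comm, quadBB]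
  have ht'q : t' = dotProduct (B'.mulVec u') (B'.mulVec u') := by
    rw [ht', ← hxG', dotProduct_comm, quadBB]
  have ht0 : 0 ≤ t := by rw [htq]; exact dot_self_nonneg' _
  have ht'0 : 0 ≤ t' := by rw [ht'q]; exact dot_self_nonneg' _
  -- cross terms
  have hc : dotProduct (B.mulVec u) (B.mulVec u') = t' := by
    rw [← quadBB, dot_symm _ hGsym, hxG]
  have hd : dotProduct (B'.mulVec u') (B'.mulVec u) = t := by
    rw [← quadBB, dot_symm _ hG'sym, hxG']
  have he : (1-ε)^2 * dotProduct (B.mulVec u') (B.mulVec u') ≤ t' := by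
    have := (hemb2 u').1
    rw [← ht'q] at this; exact this
  have hf : dotProduct (B'.mulVec u) (B'.mulVec u) ≤ (1+ε)^2 * t := by
    have := (hemb2 u).2
    rw [← htq] at this; exact this
  -- variational inequality 1 : (1-ε)^2 * t' ≤ t
  have k1 := dot_sq_expand ((1-ε)^2) (B.mulVec u') (B.mulVec u)
  rw [dotProduct_comm (B.mulVec u') (B.mulVec u), hc] at k1
  have hst : (1-ε)^2 * t' ≤ t := by
    nlinarith [k1, he, sq_nonneg (1-ε)]
  -- variational inequality 2 : t ≤ (1+ε)^2 * t'
  have k2 := dot_sq_expand ((1+ε)^2) (B'.mulVec u') (B'.mulVec u)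
  rw [hd] at k2
  have hct : t ≤ (1+ε)^2 * t' := by
    have hc0 : (0:ℝ) < (1+ε)^2 := by positivity
    nlinarith [k2, hf, hc0]
  constructor
  · -- (1 - 8ε) t ≤ t'
    rcases le_or_gt (1 - 8*ε) 0 with h | h
    · have : (1 - 8*ε) * t ≤ 0 := mul_nonpos_of_nonpos_of_nonneg h ht0
      linarith
    · have h1 : (1 - 8*ε) * t ≤ (1 - 8*ε) * ((1+ε)^2 * t') :=
        mul_le_mul_of_nonneg_left hct h.le
      have h2 : (1 - 8*ε) * ((1+ε)^2 * t') ≤ t' := by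
        nlinarith [ht'0, mul_nonneg hε.le ht'0,
          mul_nonneg (mul_nonneg hε.le hε.le) ht'0,
          mul_nonneg (mul_nonneg (mul_nonneg hε.le hε.le) hε.le) ht'0]
      linarith
  · -- t' ≤ (1 + 8ε) t
    have h2 : t' ≤ (1 + 8*ε) * ((1-ε)^2 * t') := by
      nlinarith [ht'0, mul_nonneg (mul_nonneg hε.le ht'0) (by linarith : (0:ℝ) ≤ 1 - 2*ε),
        mul_nonneg (mul_nonneg hε.le ht'0) (sq_nonneg (1 - 2*ε)),
        mul_nonneg (mul_nonneg hε.le ht'0) (sq_nonneg ε)]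
    have h3 : (1 + 8*ε) * ((1-ε)^2 * t') ≤ (1 + 8*ε) * t :=
      mul_le_mul_of_nonneg_left hst (by linarith)
    linarith
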